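/- Let X be an infinite-dimensional complex Hilbert space, let p, q ∈ [1,∞] be conjugate exponents, let C ∈ B^p(X), T ∈ B^q(X), and let (C_n) in B^p(X) and (T_n) in B^q(X) be sequences with ‖C − C_n‖_p → 0 and ‖T − T_n‖_q → 0. Then the closures of the C_n-numerical ranges W_{C_n}(T_n) converge to the closure of W_C(T) in the Hausdorff metric on compact subsets of ℂ. -/

import Mathlib

open scoped ComplexInnerProductSpace ENNReal
open Filter

noncomputable section
universe u v

noncomputable def sv {X : Type u} {Y : Type v} [NormedAddCommGroup X] [InnerProductSpace ℂ X]
    [NormedAddCommGroup Y] [InnerProductSpace ℂ Y] (C : X →L[ℂ] Y) (n : ℕ) : ℝ :=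
  ⨅ F : {F : X →L[ℂ] Y // Module.rank ℂ (LinearMap.range (F : X →ₗ[ℂ] Y)) ≤ n},
    ‖C - (F : X →L[ℂ] Y)‖


def MemSchatten {X : Type u} {Y : Type v} [NormedAddCommGroup X] [InnerProductSpace ℂ X]
    [NormedAddCommGroup Y] [InnerProductSpace ℂ Y] (p : ℝ≥0∞) (C : X →L[ℂ] Y) : Prop :=
  IsCompactOperator C ∧ (p ≠ ∞ → Summable (fun n => sv C n ^ p.toReal))

noncomputable def schattenNorm {X : Type u} {Y : Type v} [NormedAddCommGroup X]
    [InnerProductSpace ℂ X] [NormedAddCommGroup Y] [InnerProductSpace ℂ Y]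
    (p : ℝ≥0∞) (C : X →L[ℂ] Y) : ℝ :=
  if p = ∞ then ‖C‖ else (∑' n, sv C n ^ p.toReal) ^ (1 / p.toReal)

def IsTraceOf {Y : Type v} [NormedAddCommGroup Y] [InnerProductSpace ℂ Y] [CompleteSpace Y]
    (A : Y →L[ℂ] Y) (z : ℂ) : Prop :=
  ∀ (ι : Type v) (b : HilbertBasis ι ℂ Y), HasSum (fun i => ⟪b i, A (b i)⟫) z

section SV
variable {X : Type u} [NormedAddCommGroup X] [InnerProductSpace ℂ X]

instance svNE (n : ℕ) :
    Nonempty {F : X →L[ℂ] X // Module.rank ℂ (LinearMap.range (F : X →ₗ[ℂ] X)) ≤ n} :=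
  ⟨⟨0, by simp⟩⟩

lemma sv_nonneg (C : X →L[ℂ] X) (n : ℕ) : 0 ≤ sv C n :=
  le_ciInf fun F => norm_nonneg _

lemma sv_bdd (C : X →L[ℂ] X) (n : ℕ) :
    BddBelow (Set.range fun F : {F : X →L[ℂ] X //
      Module.rank ℂ (LinearMap.range (F : X →ₗ[ℂ] X)) ≤ n} => ‖C - (F : X →L[ℂ] X)‖) :=
  ⟨0, by rintro x ⟨F, rfl⟩; exact norm_nonneg _⟩

lemma sv_le (C F : X →L[ℂ] X) {n : ℕ}
    (h : Module.rank ℂ (LinearMap.range (F : X →ₗ[ℂ] X)) ≤ n) : sv C n ≤ ‖C - F‖ :=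
  ciInf_le (sv_bdd C n) ⟨F, h⟩

lemma sv_le_norm (C : X →L[ℂ] X) (n : ℕ) : sv C n ≤ ‖C‖ := by
  simpa using sv_le C 0 (by simp)

lemma sv_antitone (C : X →L[ℂ] X) : Antitone (sv C) := by
  intro m n hmn
  refine le_ciInf fun F => ?_
  exact sv_le C F (F.2.trans (by exact_mod_cast Nat.cast_le.mpr hmn))

lemma sv_exists (C : X →L[ℂ] X) (n : ℕ) {ε : ℝ} (hε : 0 < ε) :
    ∃ F : X →L[ℂ] X, Module.rank ℂ (LinearMap.range (F : X →ₗ[ℂ] X)) ≤ n ∧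
      ‖C - F‖ < sv C n + ε := by
  obtain ⟨⟨F, hF⟩, h⟩ := exists_lt_of_ciInf_lt (show sv C n < sv C n + ε by linarith)
  exact ⟨F, hF, h⟩

lemma sv_neg (C : X →L[ℂ] X) (n : ℕ) : sv (-C) n = sv C n := by
  have key : ∀ A : X →L[ℂ] X, sv (-A) n ≤ sv A n := by
    intro A
    refine le_ciInf fun F => ?_
    have hr : Module.rank ℂ (LinearMap.range ((-(F : X →L[ℂ] X)) : X →ₗ[ℂ] X)) ≤ n := by
      have : ((-(F : X →L[ℂ] X)) : X →ₗ[ℂ] X) = -((F : X →L[ℂ] X) : X →ₗ[ℂ] X) := rfl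
      rw [this, LinearMap.range_neg]
      exact F.2
    calc sv (-A) n ≤ ‖-A - -(F : X →L[ℂ] X)‖ := sv_le _ _ hr
      _ = ‖A - F‖ := by rw [neg_sub_neg, norm_sub_rev]
  refine le_antisymm (key C) ?_
  have := key (-C); rwa [neg_neg] at this

lemma sv_add_le (A B : X →L[ℂ] X) (m n : ℕ) : sv (A + B) (m + n) ≤ sv A m + sv B n := by
  refine le_of_forall_pos_le_add fun ε hε => ?_
  obtain ⟨F, hF, hF'⟩ := sv_exists A m (half_pos hε)
  obtain ⟨G, hG, hG'⟩ := sv_exists B n (half_pos hε)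
  have hr : Module.rank ℂ (LinearMap.range ((F + G : X →L[ℂ] X) : X →ₗ[ℂ] X)) ≤ (m + n : ℕ) := by
    have : ((F + G : X →L[ℂ] X) : X →ₗ[ℂ] X)
        = (F : X →ₗ[ℂ] X) + (G : X →ₗ[ℂ] X) := rfl
    rw [this]
    refine (LinearMap.rank_add_le _ _).trans ?_
    push_cast
    exact add_le_add hF hG
  calc sv (A + B) (m + n) ≤ ‖A + B - (F + G)‖ := sv_le _ _ hr
    _ ≤ ‖A - F‖ + ‖B - G‖ := by
        have : A + B - (F + G) = (A - F) + (B - G) := by abel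
        rw [this]; exact norm_add_le _ _
    _ ≤ sv A m + sv B n + ε := by linarith

lemma sv_mul_le (A B : X →L[ℂ] X) (m n : ℕ) : sv (A * B) (m + n) ≤ sv A m * sv B n := by
  refine le_of_forall_pos_le_add fun ε hε => ?_
  set δ : ℝ := min 1 (ε / (sv A m + sv B n + 1)) with hδdef
  have hd : 0 < sv A m + sv B n + 1 := by
    have := sv_nonneg A m; have := sv_nonneg B n; linarith
  have hδpos : 0 < δ := lt_min one_pos (div_pos hε hd)
  obtain ⟨F, hF, hF'⟩ := sv_exists A m hδpos
  obtain ⟨G, hG, hG'⟩ := sv_exists B n hδpos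
  have hr : Module.rank ℂ (LinearMap.range
      ((F * B + (A - F) * G : X →L[ℂ] X) : X →ₗ[ℂ] X)) ≤ (m + n : ℕ) := by
    have h1 : ((F * B + (A - F) * G : X →L[ℂ] X) : X →ₗ[ℂ] X)
        = ((F : X →ₗ[ℂ] X).comp (B : X →ₗ[ℂ] X))
          + (((A - F : X →L[ℂ] X) : X →ₗ[ℂ] X).comp (G : X →ₗ[ℂ] X)) := rfl
    rw [h1]
    refine (LinearMap.rank_add_le _ _).trans ?_
    push_cast
    exact add_le_add ((LinearMap.rank_comp_le_left _ _).trans hF)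
      ((LinearMap.rank_comp_le_right _ _).trans hG)
  have key : A * B - (F * B + (A - F) * G) = (A - F) * (B - G) := by noncomm_ring
  calc sv (A * B) (m + n) ≤ ‖A * B - (F * B + (A - F) * G)‖ := sv_le _ _ hr
    _ = ‖(A - F) * (B - G)‖ := by rw [key]
    _ ≤ ‖A - F‖ * ‖B - G‖ := norm_mul_le _ _
    _ ≤ (sv A m + δ) * (sv B n + δ) := by
        refine mul_le_mul hF'.le hG'.le (norm_nonneg _) ?_
        have := sv_nonneg A m; linarith
    _ ≤ sv A m * sv B n + ε := by
        have h1 : δ ≤ 1 := min_le_left _ _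
        have h2 : δ ≤ ε / (sv A m + sv B n + 1) := min_le_right _ _
        have h3 : δ * (sv A m + sv B n + 1) ≤ ε := by
          rw [← le_div_iff₀ hd]; exact h2
        nlinarith [sv_nonneg A m, sv_nonneg B n, hδpos.le]

end SV
section SV2
variable {X : Type u} [NormedAddCommGroup X] [InnerProductSpace ℂ X] [CompleteSpace X]

lemma sv_zero_eq_norm (C : X →L[ℂ] X) : sv C 0 = ‖C‖ := by
  refine le_antisymm (sv_le_norm C 0) (le_ciInf fun F => ?_)
  have h0 : LinearMap.range ((F : X →L[ℂ] X) : X →ₗ[ℂ] X) = ⊥ := by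
    have h2 : Module.rank ℂ (LinearMap.range ((F : X →L[ℂ] X) : X →ₗ[ℂ] X)) = 0 :=
      le_antisymm (by simpa using F.2) zero_le
    exact Submodule.rank_eq_zero.mp h2
  have : (F : X →L[ℂ] X) = 0 := by
    ext x
    have : (F : X →L[ℂ] X) x ∈ LinearMap.range ((F : X →L[ℂ] X) : X →ₗ[ℂ] X) :=
      LinearMap.mem_range_self _ x
    rw [h0] at this
    simpa using this
  rw [this, sub_zero]

lemma norm_le_one_of_unitary {U : X →L[ℂ] X} (hU : U ∈ unitary (X →L[ℂ] X)) : ‖U‖ ≤ 1 := by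
  refine ContinuousLinearMap.opNorm_le_bound U zero_le_one fun x => ?_
  rw [ContinuousLinearMap.norm_map_of_mem_unitary hU, one_mul]

lemma sv_mul_right_le (A V : X →L[ℂ] X) (hV : ‖V‖ ≤ 1) (n : ℕ) : sv (A * V) n ≤ sv A n := by
  refine le_ciInf fun F => ?_
  have hr : Module.rank ℂ (LinearMap.range (((F : X →L[ℂ] X) * V : X →L[ℂ] X) : X →ₗ[ℂ] X)) ≤ n := by
    have h1 : (((F : X →L[ℂ] X) * V : X →L[ℂ] X) : X →ₗ[ℂ] X)
        = ((F : X →L[ℂ] X) : X →ₗ[ℂ] X).comp (V : X →ₗ[ℂ] X) := rfl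
    rw [h1]
    exact (LinearMap.rank_comp_le_left _ _).trans F.2
  calc sv (A * V) n ≤ ‖A * V - (F : X →L[ℂ] X) * V‖ := sv_le _ _ hr
    _ = ‖(A - (F : X →L[ℂ] X)) * V‖ := by rw [sub_mul]
    _ ≤ ‖A - (F : X →L[ℂ] X)‖ * ‖V‖ := norm_mul_le _ _
    _ ≤ ‖A - (F : X →L[ℂ] X)‖ := by
        simpa using mul_le_mul_of_nonneg_left hV (norm_nonneg _)

lemma sv_mul_left_le (A W : X →L[ℂ] X) (hW : ‖W‖ ≤ 1) (n : ℕ) : sv (W * A) n ≤ sv A n := by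
  refine le_ciInf fun F => ?_
  have hr : Module.rank ℂ (LinearMap.range ((W * (F : X →L[ℂ] X) : X →L[ℂ] X) : X →ₗ[ℂ] X)) ≤ n := by
    have h1 : ((W * (F : X →L[ℂ] X) : X →L[ℂ] X) : X →ₗ[ℂ] X)
        = (W : X →ₗ[ℂ] X).comp ((F : X →L[ℂ] X) : X →ₗ[ℂ] X) := rfl
    rw [h1]
    exact (LinearMap.rank_comp_le_right _ _).trans F.2
  calc sv (W * A) n ≤ ‖W * A - W * (F : X →L[ℂ] X)‖ := sv_le _ _ hr
    _ = ‖W * (A - (F : X →L[ℂ] X))‖ := by rw [mul_sub]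
    _ ≤ ‖W‖ * ‖A - (F : X →L[ℂ] X)‖ := norm_mul_le _ _
    _ ≤ ‖A - (F : X →L[ℂ] X)‖ := by
        simpa using mul_le_mul_of_nonneg_right hW (norm_nonneg _)

lemma sv_mul_unitary_right (A : X →L[ℂ] X) {U : X →L[ℂ] X}
    (hU : U ∈ unitary (X →L[ℂ] X)) (n : ℕ) : sv (A * U) n = sv A n := by
  refine le_antisymm (sv_mul_right_le A U (norm_le_one_of_unitary hU) n) ?_
  have h1 : A * U * star U = A := by
    rw [mul_assoc, Unitary.mul_star_self_of_mem hU, mul_one]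
  calc sv A n = sv (A * U * star U) n := by rw [h1]
    _ ≤ sv (A * U) n :=
        sv_mul_right_le _ _ (norm_le_one_of_unitary (Unitary.star_mem hU)) n

lemma sv_mul_unitary_left (A : X →L[ℂ] X) {U : X →L[ℂ] X}
    (hU : U ∈ unitary (X →L[ℂ] X)) (n : ℕ) : sv (U * A) n = sv A n := by
  refine le_antisymm (sv_mul_left_le A U (norm_le_one_of_unitary hU) n) ?_
  have h1 : star U * (U * A) = A := by
    rw [← mul_assoc, Unitary.star_mul_self_of_mem hU, one_mul]
  calc sv A n = sv (star U * (U * A)) n := by rw [h1]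
    _ ≤ sv (U * A) n :=
        sv_mul_left_le _ _ (norm_le_one_of_unitary (Unitary.star_mem hU)) n

end SV2
section Summ

lemma sum_range_two_mul_div (h : ℕ → ℝ) (N : ℕ) :
    ∑ m ∈ Finset.range (2 * N), h (m / 2) = 2 * ∑ k ∈ Finset.range N, h k := by
  induction N with
  | zero => simp
  | succ N ih =>
      have h2 : 2 * (N + 1) = (2 * N + 1) + 1 := by ring
      rw [h2, Finset.sum_range_succ, Finset.sum_range_succ, ih, Finset.sum_range_succ]
      have e1 : (2 * N + 1) / 2 = N := by omega
      have e2 : (2 * N) / 2 = N := by omega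
      rw [e1, e2]; ring

lemma summable_div_two {g : ℕ → ℝ} (hg0 : ∀ n, 0 ≤ g n) (hg : Summable g) :
    Summable (fun m => g (m / 2)) := by
  refine summable_of_sum_range_le (c := 2 * ∑' n, g n) (fun n => hg0 _) fun n => ?_
  calc ∑ m ∈ Finset.range n, g (m / 2)
      ≤ ∑ m ∈ Finset.range (2 * n), g (m / 2) := by
        refine Finset.sum_le_sum_of_subset_of_nonneg ?_ fun _ _ _ => hg0 _
        exact Finset.range_subset_range.mpr (by omega)
    _ = 2 * ∑ k ∈ Finset.range n, g k := sum_range_two_mul_div g n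
    _ ≤ 2 * ∑' n, g n := by
        have := Summable.sum_le_tsum (Finset.range n) (fun i _ => hg0 i) hg
        linarith

lemma tsum_div_two_le {g : ℕ → ℝ} (hg0 : ∀ n, 0 ≤ g n) (hg : Summable g) :
    ∑' m, g (m / 2) ≤ 2 * ∑' n, g n := by
  refine Real.tsum_le_of_sum_range_le (fun n => hg0 _) fun n => ?_
  calc ∑ m ∈ Finset.range n, g (m / 2)
      ≤ ∑ m ∈ Finset.range (2 * n), g (m / 2) := by
        refine Finset.sum_le_sum_of_subset_of_nonneg ?_ fun _ _ _ => hg0 _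
        exact Finset.range_subset_range.mpr (by omega)
    _ = 2 * ∑ k ∈ Finset.range n, g k := sum_range_two_mul_div g n
    _ ≤ 2 * ∑' n, g n := by
        have := Summable.sum_le_tsum (Finset.range n) (fun i _ => hg0 i) hg
        linarith

end Summ
section FinRank
variable {X : Type u} [NormedAddCommGroup X] [InnerProductSpace ℂ X] [CompleteSpace X]

lemma finrank_rep (F : X →L[ℂ] X) {r : ℕ}
    (h : Module.rank ℂ (LinearMap.range (F : X →ₗ[ℂ] X)) ≤ r) :
    ∃ a c : ℕ → X, (∀ j, ‖a j‖ ≤ ‖F‖) ∧ (∀ j, ‖c j‖ ≤ 1) ∧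
      (∀ j, r ≤ j → a j = 0 ∧ c j = 0) ∧
      ∀ x, F x = ∑ j ∈ Finset.range r, ⟪a j, x⟫ • c j := by
  set S : Submodule ℂ X := LinearMap.range (F : X →ₗ[ℂ] X) with hS
  have hfd : FiniteDimensional ℂ S :=
    IsNoetherian.iff_fg.mp (IsNoetherian.iff_rank_lt_aleph0.mpr
      (lt_of_le_of_lt h (Cardinal.nat_lt_aleph0 r)))
  set d : ℕ := Module.finrank ℂ S with hd
  have hdr : d ≤ r := Module.finrank_le_of_rank_le h
  set b : OrthonormalBasis (Fin d) ℂ S := stdOrthonormalBasis ℂ S with hb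
  refine ⟨fun j => if hj : j < d then ContinuousLinearMap.adjoint F ((b ⟨j, hj⟩ : S) : X) else 0,
          fun j => if hj : j < d then ((b ⟨j, hj⟩ : S) : X) else 0, ?_, ?_, ?_, ?_⟩
  · intro j
    by_cases hj : j < d
    · simp only [dif_pos hj]
      calc ‖ContinuousLinearMap.adjoint F ((b ⟨j, hj⟩ : S) : X)‖
          ≤ ‖ContinuousLinearMap.adjoint F‖ * ‖((b ⟨j, hj⟩ : S) : X)‖ :=
            ContinuousLinearMap.le_opNorm _ _
        _ = ‖F‖ := by
            have h1 : ‖((b ⟨j, hj⟩ : S) : X)‖ = 1 := by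
              have := b.orthonormal.1 ⟨j, hj⟩
              exact this
            rw [h1, mul_one, ContinuousLinearMap.adjoint.norm_map]
    · simp only [dif_neg hj]; simp
  · intro j
    by_cases hj : j < d
    · simp only [dif_pos hj]
      have := b.orthonormal.1 ⟨j, hj⟩
      simp at this
      exact (b.orthonormal.1 ⟨j, hj⟩).le
    · simp only [dif_neg hj]; simp
  · intro j hj
    have : ¬ j < d := by omega
    simp [dif_neg this]
  · intro x
    have hmem : F x ∈ S := LinearMap.mem_range_self _ x
    set y : S := ⟨F x, hmem⟩ with hy
    have hrep : ∑ i : Fin d, ⟪b i, y⟫ • b i = y := b.sum_repr' y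
    have hrepX : (y : X) = ∑ i : Fin d, ⟪(b i : X), (y : X)⟫ • ((b i : S) : X) := by
      conv_lhs => rw [← hrep]
      push_cast
      refine Finset.sum_congr rfl fun i _ => ?_
      rw [Submodule.coe_inner]
    have hco : ∀ i : Fin d, ⟪((b i : S) : X), (y : X)⟫
        = ⟪ContinuousLinearMap.adjoint F ((b i : S) : X), x⟫ := by
      intro i
      rw [ContinuousLinearMap.adjoint_inner_left]
    have hfin : (∑ j ∈ Finset.range d, (⟪(if hj : j < d then
          ContinuousLinearMap.adjoint F ((b ⟨j, hj⟩ : S) : X) else 0), x⟫ : ℂ) •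
          (if hj : j < d then ((b ⟨j, hj⟩ : S) : X) else 0))
        = ∑ i : Fin d, (⟪((b i : S) : X), (y : X)⟫ : ℂ) • ((b i : S) : X) := by
      rw [Finset.sum_range]
      refine Finset.sum_congr rfl fun i _ => ?_
      have hi : (i : ℕ) < d := i.isLt
      simp only [dif_pos hi]
      have hieta : (⟨(i : ℕ), hi⟩ : Fin d) = i := rfl
      rw [hieta, hco i]
    have hext : (∑ j ∈ Finset.range d, (⟪(if hj : j < d then
          ContinuousLinearMap.adjoint F ((b ⟨j, hj⟩ : S) : X) else 0), x⟫ : ℂ) •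
          (if hj : j < d then ((b ⟨j, hj⟩ : S) : X) else 0))
        = ∑ j ∈ Finset.range r, (⟪(if hj : j < d then
          ContinuousLinearMap.adjoint F ((b ⟨j, hj⟩ : S) : X) else 0), x⟫ : ℂ) •
          (if hj : j < d then ((b ⟨j, hj⟩ : S) : X) else 0) := by
      refine Finset.sum_subset (Finset.range_subset_range.mpr hdr) fun j _ hj => ?_
      have hjd : ¬ j < d := by simpa using hj
      simp [dif_neg hjd]
    calc F x = (y : X) := rfl
      _ = ∑ i : Fin d, ⟪(b i : X), (y : X)⟫ • ((b i : S) : X) := hrepX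
      _ = ∑ j ∈ Finset.range r, (⟪(if hj : j < d then
          ContinuousLinearMap.adjoint F ((b ⟨j, hj⟩ : S) : X) else 0), x⟫ : ℂ) •
          (if hj : j < d then ((b ⟨j, hj⟩ : S) : X) else 0) := by
          rw [← hext, hfin]

end FinRank
section Trace
variable {X : Type u} [NormedAddCommGroup X] [InnerProductSpace ℂ X] [CompleteSpace X]

lemma cs_sum {ι : Type*} (b : HilbertBasis ι ℂ X) (u v : X) :
    Summable (fun i => ‖⟪u, b i⟫‖ * ‖⟪b i, v⟫‖) ∧
      ∑' i, ‖⟪u, b i⟫‖ * ‖⟪b i, v⟫‖ ≤ ‖u‖ * ‖v‖ := by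
  have hu := b.orthonormal.inner_products_summable u
  have hv := b.orthonormal.inner_products_summable v
  have hub := b.orthonormal.tsum_inner_products_le u
  have hvb := b.orthonormal.tsum_inner_products_le v
  by_cases h0 : u = 0 ∨ v = 0
  · have hz : (fun i => ‖⟪u, b i⟫‖ * ‖⟪b i, v⟫‖) = fun _ => 0 := by
      funext i
      rcases h0 with h | h <;> simp [h]
    rw [hz]
    refine ⟨summable_zero, ?_⟩
    rw [tsum_zero]
    positivity
  · push_neg at h0
    have hu0 : 0 < ‖u‖ := norm_pos_iff.mpr h0.1
    have hv0 : 0 < ‖v‖ := norm_pos_iff.mpr h0.2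
    set t : ℝ := ‖v‖ / ‖u‖ with ht
    have ht0 : 0 < t := div_pos hv0 hu0
    have hpt : ∀ i, ‖⟪u, b i⟫‖ * ‖⟪b i, v⟫‖
        ≤ t / 2 * ‖⟪b i, u⟫‖ ^ 2 + 1 / (2 * t) * ‖⟪b i, v⟫‖ ^ 2 := by
      intro i
      have h1 : ‖⟪u, b i⟫‖ = ‖⟪b i, u⟫‖ := norm_inner_symm _ _
      rw [h1]
      set A := ‖⟪b i, u⟫‖; set B := ‖⟪b i, v⟫‖
      have hA : 0 ≤ A := norm_nonneg _
      have hB : 0 ≤ B := norm_nonneg _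
      rw [← sub_nonneg]
      have hkey : t / 2 * A ^ 2 + 1 / (2 * t) * B ^ 2 - A * B = (t * A - B) ^ 2 / (2 * t) := by
        field_simp
        ring
      rw [hkey]
      positivity
    have hsum2 : Summable (fun i => t / 2 * ‖⟪b i, u⟫‖ ^ 2 + 1 / (2 * t) * ‖⟪b i, v⟫‖ ^ 2) :=
      (hu.mul_left _).add (hv.mul_left _)
    have hs : Summable (fun i => ‖⟪u, b i⟫‖ * ‖⟪b i, v⟫‖) :=
      Summable.of_nonneg_of_le (fun i => by positivity) hpt hsum2
    refine ⟨hs, ?_⟩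
    calc ∑' i, ‖⟪u, b i⟫‖ * ‖⟪b i, v⟫‖
        ≤ ∑' i, (t / 2 * ‖⟪b i, u⟫‖ ^ 2 + 1 / (2 * t) * ‖⟪b i, v⟫‖ ^ 2) :=
          Summable.tsum_le_tsum hpt hs hsum2
      _ = t / 2 * ∑' i, ‖⟪b i, u⟫‖ ^ 2 + 1 / (2 * t) * ∑' i, ‖⟪b i, v⟫‖ ^ 2 := by
          rw [Summable.tsum_add (hu.mul_left _) (hv.mul_left _), tsum_mul_left, tsum_mul_left]
      _ ≤ t / 2 * ‖u‖ ^ 2 + 1 / (2 * t) * ‖v‖ ^ 2 := by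
          have h2 : 0 < 1 / (2 * t) := by positivity
          have h3 : (0:ℝ) < t / 2 := by positivity
          exact add_le_add (mul_le_mul_of_nonneg_left hub h3.le)
            (mul_le_mul_of_nonneg_left hvb h2.le)
      _ = ‖u‖ * ‖v‖ := by
          rw [ht]
          field_simp
          ring
    
lemma traceOf_rep {κ : Type*} (M : X →L[ℂ] X) (a c : κ → X)
    (h1 : Summable fun k => ‖a k‖ * ‖c k‖)
    (h2 : ∀ x, HasSum (fun k => ⟪a k, x⟫ • c k) (M x)) :
    IsTraceOf M (∑' k, ⟪a k, c k⟫) ∧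
      ‖∑' k, (⟪a k, c k⟫ : ℂ)‖ ≤ ∑' k, ‖a k‖ * ‖c k‖ := by
  have hinner : Summable fun k => ‖(⟪a k, c k⟫ : ℂ)‖ :=
    Summable.of_nonneg_of_le (fun k => norm_nonneg _)
      (fun k => norm_inner_le_norm _ _) h1
  constructor
  · intro ι b
    set g : κ × ι → ℂ := fun p => ⟪a p.1, b p.2⟫ * ⟪b p.2, c p.1⟫ with hg
    have hnormg : Summable fun p : κ × ι => ‖g p‖ := by
      rw [summable_prod_of_nonneg (fun p => norm_nonneg _)]
      constructor
      · intro k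
        have := (cs_sum b (a k) (c k)).1
        simpa [hg, norm_mul] using this
      · refine Summable.of_nonneg_of_le
          (fun k => tsum_nonneg fun i => norm_nonneg _) (fun k => ?_) h1
        have := (cs_sum b (a k) (c k)).2
        calc ∑' i, ‖g (k, i)‖ = ∑' i, ‖⟪a k, b i⟫‖ * ‖⟪b i, c k⟫‖ := by
              simp [hg, norm_mul]
          _ ≤ ‖a k‖ * ‖c k‖ := this
    have hgs : Summable g := hnormg.of_norm
    obtain ⟨S, hS⟩ := hgs
    have hfib1 : HasSum (fun k => (⟪a k, c k⟫ : ℂ)) S :=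
      hS.prod_fiberwise fun k => b.hasSum_inner_mul_inner (a k) (c k)
    have hSval : S = ∑' k, (⟪a k, c k⟫ : ℂ) := hfib1.tsum_eq.symm
    have hswap : HasSum (fun p : ι × κ => g (Prod.swap p)) S := by
      have : (fun p : ι × κ => g (Prod.swap p)) = g ∘ (Equiv.prodComm ι κ) := rfl
      rw [this]
      exact ((Equiv.prodComm ι κ).hasSum_iff).mpr hS
    have hfib2 : HasSum (fun i => (⟪b i, M (b i)⟫ : ℂ)) S := by
      refine hswap.prod_fiberwise fun i => ?_
      have hx := h2 (b i)
      have := hx.mapL (innerSL ℂ (b i))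
      have heq : (fun k => (innerSL ℂ (b i)) (⟪a k, b i⟫ • c k))
          = fun k => g (k, i) := by
        funext k
        simp [hg, innerSL_apply_apply, inner_smul_right]
      rwa [heq] at this
    rwa [hSval] at hfib2
  · calc ‖∑' k, (⟪a k, c k⟫ : ℂ)‖ ≤ ∑' k, ‖(⟪a k, c k⟫ : ℂ)‖ :=
        norm_tsum_le_tsum_norm hinner
    _ ≤ ∑' k, ‖a k‖ * ‖c k‖ :=
        Summable.tsum_le_tsum (fun k => norm_inner_le_norm _ _) hinner h1

lemma isTraceOf_unique {M : X →L[ℂ] X} {z w : ℂ}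
    (hz : IsTraceOf M z) (hw : IsTraceOf M w) : z = w := by
  obtain ⟨s, b, -⟩ := exists_hilbertBasis ℂ X
  exact (hz _ b).unique (hw _ b)

lemma isTraceOf_add {M N : X →L[ℂ] X} {z w : ℂ}
    (hz : IsTraceOf M z) (hw : IsTraceOf N w) : IsTraceOf (M + N) (z + w) := by
  intro ι b
  have := (hz ι b).add (hw ι b)
  simpa [inner_add_right] using this

end Trace
section Condense

lemma condensation {g : ℕ → ℝ} (hg0 : ∀ n, 0 ≤ g n) (hanti : ∀ ⦃m n : ℕ⦄, m ≤ n → g n ≤ g m)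
    (hs : Summable g) :
    Summable (fun k => (2:ℝ)^k * g (2^k)) ∧
      ∑' k, (2:ℝ)^k * g (2^k) ≤ g 1 + 2 * ∑' n, g n := by
  have key : ∀ K : ℕ, ∑ k ∈ Finset.range (K+1), (2:ℝ)^k * g (2^k)
      ≤ g 1 + 2 * ∑ n ∈ Finset.Ico 1 (2^K), g n := by
    intro K
    induction K with
    | zero => simp
    | succ K ih =>
        rw [Finset.sum_range_succ]
        have hstep : (2:ℝ)^(K+1) * g (2^(K+1)) ≤ 2 * ∑ n ∈ Finset.Ico (2^K) (2^(K+1)), g n := by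
          have hcard : (Finset.Ico (2^K) (2^(K+1))).card = 2^K := by
            rw [Nat.card_Ico, pow_succ]
            omega
          have hlow : ∀ n ∈ Finset.Ico (2^K) (2^(K+1)), g (2^(K+1)) ≤ g n := by
            intro n hn
            exact hanti (Finset.mem_Ico.mp hn).2.le
          have hsumlow : (2^K : ℝ) * g (2^(K+1)) ≤ ∑ n ∈ Finset.Ico (2^K) (2^(K+1)), g n := by
            have := Finset.card_nsmul_le_sum (Finset.Ico (2^K) (2^(K+1)))
              g (g (2^(K+1))) hlow
            rw [hcard] at this
            simpa [nsmul_eq_mul] using this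
          have h2 : (2:ℝ)^(K+1) = 2 * (2:ℝ)^K := by ring
          rw [h2, mul_assoc]
          linarith
        have hsplit : ∑ n ∈ Finset.Ico 1 (2^K), g n + ∑ n ∈ Finset.Ico (2^K) (2^(K+1)), g n
            = ∑ n ∈ Finset.Ico 1 (2^(K+1)), g n := by
          refine Finset.sum_Ico_consecutive _ ?_ ?_
          · exact Nat.one_le_two_pow
          · exact Nat.pow_le_pow_right (by norm_num) (by omega)
        linarith
  have hico : ∀ K : ℕ, ∑ n ∈ Finset.Ico 1 (2^K), g n ≤ ∑' n, g n := by
    intro K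
    exact Summable.sum_le_tsum _ (fun i _ => hg0 i) hs
  have hbound : ∀ n : ℕ, ∑ k ∈ Finset.range n, (2:ℝ)^k * g (2^k) ≤ g 1 + 2 * ∑' n, g n := by
    intro n
    calc ∑ k ∈ Finset.range n, (2:ℝ)^k * g (2^k)
        ≤ ∑ k ∈ Finset.range (n+1), (2:ℝ)^k * g (2^k) := by
          refine Finset.sum_le_sum_of_subset_of_nonneg (Finset.range_subset_range.mpr (by omega)) ?_
          intro i _ _
          have := hg0 (2^i)
          positivity
      _ ≤ g 1 + 2 * ∑ n ∈ Finset.Ico 1 (2^n), g n := key n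
      _ ≤ g 1 + 2 * ∑' n, g n := by
          have := hico n
          linarith
  have hpos : ∀ k : ℕ, 0 ≤ (2:ℝ)^k * g (2^k) := by
    intro k
    have := hg0 (2^k)
    positivity
  exact ⟨summable_of_sum_range_le hpos hbound, Real.tsum_le_of_sum_range_le hpos hbound⟩

end Condense
section TraceExists
variable {X : Type u} [NormedAddCommGroup X] [InnerProductSpace ℂ X] [CompleteSpace X]

lemma rank_sub_le' (F G : X →L[ℂ] X) {m n : ℕ}
    (hF : Module.rank ℂ (LinearMap.range (F : X →ₗ[ℂ] X)) ≤ m)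
    (hG : Module.rank ℂ (LinearMap.range (G : X →ₗ[ℂ] X)) ≤ n) :
    Module.rank ℂ (LinearMap.range ((F - G : X →L[ℂ] X) : X →ₗ[ℂ] X)) ≤ ((m + n : ℕ) : Cardinal) := by
  have h1 : ((F - G : X →L[ℂ] X) : X →ₗ[ℂ] X) = (F : X →ₗ[ℂ] X) + (-(G : X →ₗ[ℂ] X)) := by
    ext x; simp [sub_eq_add_neg]
  rw [h1]
  refine (LinearMap.rank_add_le _ _).trans ?_
  have h2 : LinearMap.rank (-(G : X →ₗ[ℂ] X)) = LinearMap.rank (G : X →ₗ[ℂ] X) := by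
    unfold LinearMap.rank
    rw [LinearMap.range_neg]
  rw [h2]
  push_cast
  exact add_le_add hF hG

lemma trace_exists_eps (M : X →L[ℂ] X) (h : Summable (fun n => sv M n)) {ε : ℝ} (hε : 0 < ε) :
    ∃ z, IsTraceOf M z ∧ ‖z‖ ≤ 30 * (∑' n, sv M n) + 40 * ε := by
  have htsum0 : 0 ≤ ∑' n, sv M n := tsum_nonneg fun n => sv_nonneg M n
  have hsv_le_tsum : ∀ n, sv M n ≤ ∑' n, sv M n := fun n => Summable.le_tsum h n fun j _ => sv_nonneg M j
  -- approximants
  have hchoose : ∀ k : ℕ, ∃ F : X →L[ℂ] X,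
      Module.rank ℂ (LinearMap.range (F : X →ₗ[ℂ] X)) ≤ ((2^k : ℕ) : Cardinal) ∧
      ‖M - F‖ < sv M (2^k) + ε * (1/4:ℝ)^k := by
    intro k
    obtain ⟨F, h1, h2⟩ := sv_exists M (2^k) (show (0:ℝ) < ε * (1/4:ℝ)^k by positivity)
    exact ⟨F, h1, h2⟩
  choose F hFrank hFnorm using hchoose
  set G : ℕ → X →L[ℂ] X := fun j => if j = 0 then F 0 else F j - F (j-1) with hGdef
  set R : ℕ → ℕ := fun j => if j = 0 then 1 else 2^(j+1) with hRdef
  have hGrank : ∀ j, Module.rank ℂ (LinearMap.range ((G j : X →L[ℂ] X) : X →ₗ[ℂ] X))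
      ≤ ((R j : ℕ) : Cardinal) := by
    intro j
    match j with
    | 0 =>
        have h1 : G 0 = F 0 := by simp [hGdef]
        rw [h1]
        simpa [hRdef] using hFrank 0
    | (jj+1) =>
        have h1 : G (jj+1) = F (jj+1) - F jj := by simp [hGdef]
        have h2 : R (jj+1) = 2^(jj+2) := by simp [hRdef]
        rw [h1, h2]
        refine (rank_sub_le' _ _ (hFrank (jj+1)) (hFrank jj)).trans ?_
        refine Nat.cast_le.mpr ?_
        have e1 : (2:ℕ)^(jj+2) = 2^(jj+1) * 2 := by rw [pow_succ]
        have e2 : (2:ℕ)^(jj+1) = 2^jj * 2 := by rw [pow_succ]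
        omega
  set NB : ℕ → ℝ := fun j => if j = 0 then sv M 0 + sv M 1 + ε
      else 2 * sv M (2^(j-1)) + 2 * ε * (1/4:ℝ)^(j-1) with hNBdef
  have hNB0 : ∀ j, 0 ≤ NB j := by
    intro j
    match j with
    | 0 =>
        have := sv_nonneg M 0; have := sv_nonneg M 1
        simp only [hNBdef, if_pos rfl]
        positivity
    | (jj+1) =>
        have := sv_nonneg M (2^jj)
        simp only [hNBdef, if_neg (Nat.succ_ne_zero jj)]
        have h4 : (0:ℝ) ≤ (1/4:ℝ)^jj := by positivity
        simp only [Nat.add_sub_cancel]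
        positivity
  have hGnorm : ∀ j, ‖G j‖ ≤ NB j := by
    intro j
    match j with
    | 0 =>
        have h1 : G 0 = F 0 := by simp [hGdef]
        have h2 : ‖F 0‖ ≤ ‖M‖ + ‖M - F 0‖ := by
          calc ‖F 0‖ = ‖M - (M - F 0)‖ := by rw [sub_sub_cancel]
            _ ≤ ‖M‖ + ‖M - F 0‖ := norm_sub_le _ _
        have h3 := hFnorm 0
        simp only [pow_zero, mul_one] at h3
        rw [h1]
        simp only [hNBdef, if_pos rfl]
        rw [← sv_zero_eq_norm M] at h2
        linarith
    | (jj+1) =>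
        have h1 : G (jj+1) = F (jj+1) - F jj := by simp [hGdef]
        have h2 : F (jj+1) - F jj = (M - F jj) - (M - F (jj+1)) := by abel
        have h3 : ‖F (jj+1) - F jj‖ ≤ ‖M - F jj‖ + ‖M - F (jj+1)‖ := by
          rw [h2]
          exact norm_sub_le _ _
        have h4 := hFnorm jj
        have h5 := hFnorm (jj+1)
        have h6 : sv M (2^(jj+1)) ≤ sv M (2^jj) :=
          sv_antitone M (Nat.pow_le_pow_right (by norm_num) (by omega))
        have h7 : ε * (1/4:ℝ)^(jj+1) ≤ ε * (1/4:ℝ)^jj := by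
          have : (1/4:ℝ)^(jj+1) ≤ (1/4:ℝ)^jj :=
            pow_le_pow_of_le_one (by norm_num) (by norm_num) (by omega)
          exact mul_le_mul_of_nonneg_left this hε.le
        rw [h1]
        simp only [hNBdef, if_neg (Nat.succ_ne_zero jj), Nat.add_sub_cancel]
        linarith
  -- nuclear reps of the blocks
  choose a c ha hc hzero hrep using fun j => finrank_rep (G j) (hGrank j)
  set A : ℕ × ℕ → X := fun p => a p.1 p.2 with hAdef
  set CC : ℕ × ℕ → X := fun p => c p.1 p.2 with hCCdef
  -- fiberwise summability data
  have hfiber_zero : ∀ j l, R j ≤ l → ‖a j l‖ * ‖c j l‖ = 0 := by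
    intro j l hl
    rw [(hzero j l hl).1]
    simp
  have hfiber_sum : ∀ j, Summable (fun l => ‖a j l‖ * ‖c j l‖) := by
    intro j
    exact summable_of_ne_finset_zero (s := Finset.range (R j))
      (fun l hl => hfiber_zero j l (by simpa using hl))
  have hfiber_le : ∀ j, ∑' l, ‖a j l‖ * ‖c j l‖ ≤ (R j : ℝ) * NB j := by
    intro j
    rw [tsum_eq_sum (s := Finset.range (R j))
      (fun l hl => hfiber_zero j l (by simpa using hl))]
    have : ∀ l ∈ Finset.range (R j), ‖a j l‖ * ‖c j l‖ ≤ NB j := by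
      intro l _
      calc ‖a j l‖ * ‖c j l‖ ≤ ‖G j‖ * 1 :=
            mul_le_mul (ha j l) (hc j l) (norm_nonneg _) (norm_nonneg _)
        _ = ‖G j‖ := mul_one _
        _ ≤ NB j := hGnorm j
    calc ∑ l ∈ Finset.range (R j), ‖a j l‖ * ‖c j l‖
        ≤ (Finset.range (R j)).card • NB j := Finset.sum_le_card_nsmul _ _ _ this
      _ = (R j : ℝ) * NB j := by simp [nsmul_eq_mul]
  -- the majorant BB and its summability
  set BB : ℕ → ℝ := fun j => (R j : ℝ) * NB j with hBBdef
  have hWB := condensation (g := fun n => sv M n) (fun n => sv_nonneg M n)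
    (fun m n hmn => sv_antitone M hmn) h
  have hBBsucc_eq : ∀ j, BB (j+1) = 8 * ((2:ℝ)^j * sv M (2^j)) + 8 * ε * (1/2:ℝ)^j := by
    intro j
    simp only [hBBdef, hRdef, hNBdef, if_neg (Nat.succ_ne_zero j), Nat.add_sub_cancel]
    have hcast : ((2^(j+2) : ℕ) : ℝ) = (2:ℝ)^(j+2) := by push_cast; ring
    have hhalf : (2:ℝ)^j * (1/4:ℝ)^j = (1/2:ℝ)^j := by
      rw [← mul_pow]; norm_num
    have hp2 : (2:ℝ)^(j+2) = 4 * (2:ℝ)^j := by ring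
    rw [hcast, hp2]
    nlinarith [hhalf]
  have hBBsucc_summable : Summable (fun j => BB (j+1)) := by
    rw [funext hBBsucc_eq]
    exact ((hWB.1.mul_left 8).add ((summable_geometric_two).mul_left (8 * ε)))
  have hBBsummable : Summable BB := (summable_nat_add_iff 1).mp hBBsucc_summable
  have hBBtsum : ∑' j, BB j ≤ 26 * (∑' n, sv M n) + 33 * ε := by
    rw [Summable.tsum_eq_zero_add hBBsummable]
    have hBB0 : BB 0 ≤ 2 * (∑' n, sv M n) + ε := by
      simp only [hBBdef, hRdef, hNBdef, if_pos rfl]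
      have := hsv_le_tsum 0; have := hsv_le_tsum 1
      push_cast
      linarith
    have htail : ∑' j, BB (j+1) ≤ 24 * (∑' n, sv M n) + 32 * ε := by
      rw [funext hBBsucc_eq]
      rw [Summable.tsum_add (hWB.1.mul_left 8) ((summable_geometric_two).mul_left (8 * ε)),
        tsum_mul_left, tsum_mul_left, tsum_geometric_two]
      have h1 : ∑' k, (2:ℝ)^k * sv M (2^k) ≤ sv M 1 + 2 * ∑' n, sv M n := hWB.2
      have h2 : sv M 1 ≤ ∑' n, sv M n := hsv_le_tsum 1
      nlinarith [hε.le, htsum0]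
    linarith
  -- total summability
  have h1 : Summable (fun p : ℕ × ℕ => ‖A p‖ * ‖CC p‖) := by
    rw [summable_prod_of_nonneg (fun p => by positivity)]
    exact ⟨fun j => hfiber_sum j,
      Summable.of_nonneg_of_le (fun j => tsum_nonneg fun l => by positivity)
        hfiber_le hBBsummable⟩
  have hnu : ∑' p : ℕ × ℕ, ‖A p‖ * ‖CC p‖ ≤ 26 * (∑' n, sv M n) + 33 * ε := by
    rw [Summable.tsum_prod' h1 hfiber_sum]
    refine le_trans (Summable.tsum_le_tsum hfiber_le ?_ hBBsummable) hBBtsum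
    exact ((summable_prod_of_nonneg (fun p => by positivity)).mp h1).2
  -- HasSum to M x
  have h2 : ∀ x : X, HasSum (fun p : ℕ × ℕ => (⟪A p, x⟫ : ℂ) • CC p) (M x) := by
    intro x
    have hnormx : Summable (fun p : ℕ × ℕ => ‖(⟪A p, x⟫ : ℂ) • CC p‖) := by
      refine Summable.of_nonneg_of_le (fun p => norm_nonneg _) (fun p => ?_) (h1.mul_right ‖x‖)
      rw [norm_smul]
      calc ‖(⟪A p, x⟫ : ℂ)‖ * ‖CC p‖ ≤ (‖A p‖ * ‖x‖) * ‖CC p‖ :=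
            mul_le_mul_of_nonneg_right (norm_inner_le_norm _ _) (norm_nonneg _)
        _ = ‖A p‖ * ‖CC p‖ * ‖x‖ := by ring
    have hsumfam : Summable (fun p : ℕ × ℕ => (⟪A p, x⟫ : ℂ) • CC p) := hnormx.of_norm
    obtain ⟨s, hS⟩ := hsumfam
    have hfibx : ∀ j, HasSum (fun l => (⟪a j l, x⟫ : ℂ) • c j l) (G j x) := by
      intro j
      have hz : ∀ l ∉ Finset.range (R j), (⟪a j l, x⟫ : ℂ) • c j l = 0 := by
        intro l hl
        rw [(hzero j l (by simpa using hl)).1]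
        simp
      have : HasSum (fun l => (⟪a j l, x⟫ : ℂ) • c j l) (∑ l ∈ Finset.range (R j), (⟪a j l, x⟫ : ℂ) • c j l) := hasSum_sum_of_ne_finset_zero hz
      rwa [← hrep j x] at this
    have hGx : HasSum (fun j => G j x) s := hS.prod_fiberwise hfibx
    -- identify s with M x
    have hpartial : ∀ K, ∑ j ∈ Finset.range (K+1), G j = F K := by
      intro K
      induction K with
      | zero => simp [hGdef]
      | succ K ih =>
          rw [Finset.sum_range_succ, ih]
          have : G (K+1) = F (K+1) - F K := by simp [hGdef]
          rw [this]
          abel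
    have ht1 : Tendsto (fun K => ∑ j ∈ Finset.range (K+1), G j x) atTop (nhds s) :=
      hGx.tendsto_sum_nat.comp (tendsto_add_atTop_nat 1)
    have hFx : ∀ K, ∑ j ∈ Finset.range (K+1), G j x = F K x := by
      intro K
      rw [← ContinuousLinearMap.sum_apply, hpartial K]
    have hsv2k : Tendsto (fun K => sv M (2^K)) atTop (nhds 0) := by
      refine h.tendsto_atTop_zero.comp ?_
      exact tendsto_atTop_mono (fun k => (Nat.lt_two_pow_self (n := k)).le) tendsto_id
    have hgeo : Tendsto (fun K => ε * (1/4:ℝ)^K) atTop (nhds 0) := by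
      have := tendsto_pow_atTop_nhds_zero_of_lt_one (show (0:ℝ) ≤ 1/4 by norm_num)
        (show (1/4:ℝ) < 1 by norm_num)
      simpa using this.const_mul ε
    have hb : Tendsto (fun K => (sv M (2^K) + ε * (1/4:ℝ)^K) * ‖x‖) atTop (nhds 0) := by
      have := (hsv2k.add hgeo).mul_const ‖x‖
      simpa using this
    have hptb : ∀ K, ‖F K x - M x‖ ≤ (sv M (2^K) + ε * (1/4:ℝ)^K) * ‖x‖ := by
      intro K
      calc ‖F K x - M x‖ = ‖(F K - M) x‖ := by rw [ContinuousLinearMap.sub_apply]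
        _ ≤ ‖F K - M‖ * ‖x‖ := ContinuousLinearMap.le_opNorm _ _
        _ = ‖M - F K‖ * ‖x‖ := by rw [norm_sub_rev]
        _ ≤ (sv M (2^K) + ε * (1/4:ℝ)^K) * ‖x‖ :=
            mul_le_mul_of_nonneg_right (hFnorm K).le (norm_nonneg _)
    have ht2 : Tendsto (fun K => F K x) atTop (nhds (M x)) := by
      rw [tendsto_iff_norm_sub_tendsto_zero]
      exact squeeze_zero (fun K => norm_nonneg _) hptb hb
    have ht1' : Tendsto (fun K => F K x) atTop (nhds s) := by
      rwa [funext hFx] at ht1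
    have hsMx : s = M x := tendsto_nhds_unique ht1' ht2
    rwa [hsMx] at hS
  obtain ⟨hz, hzb⟩ := traceOf_rep M A CC h1 h2
  refine ⟨_, hz, ?_⟩
  refine hzb.trans (hnu.trans ?_)
  linarith

end TraceExists
section Holder
variable {X : Type u} [NormedAddCommGroup X] [InnerProductSpace ℂ X] [CompleteSpace X]

lemma trace_exists (M : X →L[ℂ] X) (h : Summable (fun n => sv M n)) :
    ∃ z, IsTraceOf M z ∧ ‖z‖ ≤ 30 * (∑' n, sv M n) := by
  obtain ⟨z, hz, -⟩ := trace_exists_eps M h one_pos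
  refine ⟨z, hz, le_of_forall_pos_le_add fun δ hδ => ?_⟩
  obtain ⟨w, hw, hwb⟩ := trace_exists_eps M h (show (0:ℝ) < δ/40 by linarith)
  rw [isTraceOf_unique hz hw]
  linarith

lemma q_eq_one_of_p_top {p q : ℝ≥0∞} (hpq : 1/p + 1/q = 1) (hp : p = ∞) : q = 1 := by
  subst hp
  simp only [one_div, ENNReal.inv_top, zero_add] at hpq
  rwa [ENNReal.inv_eq_one] at hpq

lemma p_eq_one_of_q_top {p q : ℝ≥0∞} (hpq : 1/p + 1/q = 1) (hq : q = ∞) : p = 1 := by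
  subst hq
  simp only [one_div, ENNReal.inv_top, add_zero] at hpq
  rwa [ENNReal.inv_eq_one] at hpq

lemma schattenNorm_nonneg {p : ℝ≥0∞} (C : X →L[ℂ] X) : 0 ≤ schattenNorm p C := by
  unfold schattenNorm
  split
  · exact norm_nonneg _
  · exact Real.rpow_nonneg (tsum_nonneg fun n => Real.rpow_nonneg (sv_nonneg C n) _) _

lemma holder_sv (p q : ℝ≥0∞) (hp : 1 ≤ p) (hq : 1 ≤ q) (hpq : 1/p + 1/q = 1)
    (A B : X →L[ℂ] X) (hA : p ≠ ∞ → Summable (fun n => sv A n ^ p.toReal))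
    (hB : q ≠ ∞ → Summable (fun n => sv B n ^ q.toReal)) :
    Summable (fun k => sv A k * sv B k) ∧
      ∑' k, sv A k * sv B k ≤ schattenNorm p A * schattenNorm q B := by
  by_cases hptop : p = ∞
  · have hq1 : q = 1 := q_eq_one_of_p_top hpq hptop
    have hBs : Summable (fun n => sv B n) := by
      have := hB (by rw [hq1]; exact ENNReal.one_ne_top)
      rw [hq1] at this
      simpa [ENNReal.toReal_one, Real.rpow_one] using this
    have hle : ∀ k, sv A k * sv B k ≤ ‖A‖ * sv B k := fun k =>
      mul_le_mul_of_nonneg_right (sv_le_norm A k) (sv_nonneg B k)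
    have hs : Summable (fun k => sv A k * sv B k) :=
      Summable.of_nonneg_of_le (fun k => mul_nonneg (sv_nonneg A k) (sv_nonneg B k))
        hle (hBs.mul_left _)
    refine ⟨hs, ?_⟩
    have h1 : ∑' k, sv A k * sv B k ≤ ∑' k, ‖A‖ * sv B k :=
      Summable.tsum_le_tsum hle hs (hBs.mul_left _)
    rw [tsum_mul_left] at h1
    have h2 : schattenNorm p A = ‖A‖ := by rw [hptop]; simp [schattenNorm]
    have h3 : schattenNorm q B = ∑' n, sv B n := by
      rw [hq1]
      simp only [schattenNorm, if_neg ENNReal.one_ne_top, ENNReal.toReal_one, Real.rpow_one]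
      simp
    rw [h2, h3]
    exact h1
  · by_cases hqtop : q = ∞
    · have hp1 : p = 1 := p_eq_one_of_q_top hpq hqtop
      have hAs : Summable (fun n => sv A n) := by
        have := hA (by rw [hp1]; exact ENNReal.one_ne_top)
        rw [hp1] at this
        simpa [ENNReal.toReal_one, Real.rpow_one] using this
      have hle : ∀ k, sv A k * sv B k ≤ sv A k * ‖B‖ := fun k =>
        mul_le_mul_of_nonneg_left (sv_le_norm B k) (sv_nonneg A k)
      have hs : Summable (fun k => sv A k * sv B k) :=
        Summable.of_nonneg_of_le (fun k => mul_nonneg (sv_nonneg A k) (sv_nonneg B k))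
          hle (hAs.mul_right _)
      refine ⟨hs, ?_⟩
      have h1 : ∑' k, sv A k * sv B k ≤ ∑' k, sv A k * ‖B‖ :=
        Summable.tsum_le_tsum hle hs (hAs.mul_right _)
      rw [tsum_mul_right] at h1
      have h2 : schattenNorm q B = ‖B‖ := by rw [hqtop]; simp [schattenNorm]
      have h3 : schattenNorm p A = ∑' n, sv A n := by
        rw [hp1]
        simp only [schattenNorm, if_neg ENNReal.one_ne_top, ENNReal.toReal_one, Real.rpow_one]
        simp
      rw [h2, h3]
      exact h1
    · -- both finite
      have hp0 : p ≠ 0 := (lt_of_lt_of_le zero_lt_one hp).ne'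
      have hq0 : q ≠ 0 := (lt_of_lt_of_le zero_lt_one hq).ne'
      have hplt : 1 < p := by
        rcases lt_or_eq_of_le hp with h | h
        · exact h
        · exfalso
          apply hqtop
          rw [← h] at hpq
          simp only [one_div, inv_one] at hpq
          have h2 : q⁻¹ = 0 := by
            have h1 : (1:ℝ≥0∞) + q⁻¹ = 1 + 0 := by rw [add_zero]; exact hpq
            exact (ENNReal.add_right_inj (by simp)).mp h1
          rwa [ENNReal.inv_eq_zero] at h2
      have hconj : (p.toReal).HolderConjugate (q.toReal) := by
        rw [Real.holderConjugate_iff]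
        constructor
        · have := (ENNReal.toReal_lt_toReal ENNReal.one_ne_top hptop).mpr hplt
          simpa using this
        · have hfin1 : (1/p) ≠ ∞ := by
            rw [one_div]
            exact ENNReal.inv_ne_top.mpr hp0
          have hfin2 : (1/q) ≠ ∞ := by
            rw [one_div]
            exact ENNReal.inv_ne_top.mpr hq0
          have := congrArg ENNReal.toReal hpq
          rw [ENNReal.toReal_add hfin1 hfin2] at this
          simp only [one_div, ENNReal.toReal_inv, ENNReal.toReal_one] at this
          exact this
      have := Real.summable_and_inner_le_Lp_mul_Lq_tsum_of_nonneg hconj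
        (fun k => sv_nonneg A k) (fun k => sv_nonneg B k) (hA hptop) (hB hqtop)
      refine ⟨this.1, ?_⟩
      have h2 : schattenNorm p A = (∑' n, sv A n ^ p.toReal) ^ (1/p.toReal) := by
        simp [schattenNorm, if_neg hptop]
      have h3 : schattenNorm q B = (∑' n, sv B n ^ q.toReal) ^ (1/q.toReal) := by
        simp [schattenNorm, if_neg hqtop]
      rw [h2, h3]
      exact this.2

end Holder
section Key
variable {X : Type u} [NormedAddCommGroup X] [InnerProductSpace ℂ X] [CompleteSpace X]

lemma sv_conj_unitary (B : X →L[ℂ] X) {U : X →L[ℂ] X} (hU : U ∈ unitary (X →L[ℂ] X)) (k : ℕ) :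
    sv (star U * (B * U)) k = sv B k := by
  rw [sv_mul_unitary_left _ (Unitary.star_mem hU), sv_mul_unitary_right _ hU]

lemma svsum_prod (p q : ℝ≥0∞) (hp : 1 ≤ p) (hq : 1 ≤ q) (hpq : 1/p + 1/q = 1)
    (A B : X →L[ℂ] X) (hA : p ≠ ∞ → Summable (fun n => sv A n ^ p.toReal))
    (hB : q ≠ ∞ → Summable (fun n => sv B n ^ q.toReal))
    {U : X →L[ℂ] X} (hU : U ∈ unitary (X →L[ℂ] X)) :
    Summable (fun m => sv (A * (star U * (B * U))) m) ∧
      ∑' m, sv (A * (star U * (B * U))) m ≤ 2 * (schattenNorm p A * schattenNorm q B) := by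
  obtain ⟨hsum, hts⟩ := holder_sv p q hp hq hpq A B hA hB
  set g : ℕ → ℝ := fun k => sv A k * sv B k with hgdef
  have hg0 : ∀ k, 0 ≤ g k := fun k => mul_nonneg (sv_nonneg _ _) (sv_nonneg _ _)
  have hmaj : ∀ m, sv (A * (star U * (B * U))) m ≤ g (m / 2) := by
    intro m
    have h1 : sv (A * (star U * (B * U))) m ≤ sv (A * (star U * (B * U))) (m/2 + m/2) :=
      sv_antitone _ (by omega)
    refine h1.trans ((sv_mul_le A _ (m/2) (m/2)).trans ?_)
    rw [sv_conj_unitary B hU]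
  have hsd := summable_div_two hg0 hsum
  have hs : Summable (fun m => sv (A * (star U * (B * U))) m) :=
    Summable.of_nonneg_of_le (fun m => sv_nonneg _ _) hmaj hsd
  refine ⟨hs, ?_⟩
  calc ∑' m, sv (A * (star U * (B * U))) m ≤ ∑' m, g (m/2) := Summable.tsum_le_tsum hmaj hs hsd
    _ ≤ 2 * ∑' k, g k := tsum_div_two_le hg0 hsum
    _ ≤ 2 * (schattenNorm p A * schattenNorm q B) := by linarith

lemma key_trace (p q : ℝ≥0∞) (hp : 1 ≤ p) (hq : 1 ≤ q) (hpq : 1/p + 1/q = 1)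
    (A B : X →L[ℂ] X) (hA : p ≠ ∞ → Summable (fun n => sv A n ^ p.toReal))
    (hB : q ≠ ∞ → Summable (fun n => sv B n ^ q.toReal))
    {U : X →L[ℂ] X} (hU : U ∈ unitary (X →L[ℂ] X)) :
    ∃ z, IsTraceOf (A * (star U * (B * U))) z ∧
      ‖z‖ ≤ 60 * (schattenNorm p A * schattenNorm q B) := by
  obtain ⟨hs, hts⟩ := svsum_prod p q hp hq hpq A B hA hB hU
  obtain ⟨z, hz, hzb⟩ := trace_exists _ hs
  exact ⟨z, hz, by linarith⟩

end Key
section Helpers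
variable {X : Type u} [NormedAddCommGroup X] [InnerProductSpace ℂ X] [CompleteSpace X]

lemma rpow_add_le' {x y t : ℝ} (hx : 0 ≤ x) (hy : 0 ≤ y) (ht : 0 ≤ t) :
    (x + y) ^ t ≤ 2 ^ t * (x ^ t + y ^ t) := by
  have hm : 0 ≤ max x y := le_trans hx (le_max_left _ _)
  have h1 : x + y ≤ 2 * max x y := by
    have := le_max_left x y; have := le_max_right x y; linarith
  calc (x + y) ^ t ≤ (2 * max x y) ^ t :=
        Real.rpow_le_rpow (by linarith) h1 ht
    _ = 2 ^ t * (max x y) ^ t := Real.mul_rpow (by norm_num) hm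
    _ ≤ 2 ^ t * (x ^ t + y ^ t) := by
        refine mul_le_mul_of_nonneg_left ?_ (Real.rpow_nonneg (by norm_num) t)
        rcases max_cases x y with ⟨h, -⟩ | ⟨h, -⟩ <;> rw [h]
        · exact le_add_of_nonneg_right (Real.rpow_nonneg hy t)
        · exact le_add_of_nonneg_left (Real.rpow_nonneg hx t)

lemma svmem_sub {p : ℝ≥0∞} (hp : 1 ≤ p) (A B : X →L[ℂ] X)
    (hA : p ≠ ∞ → Summable (fun n => sv A n ^ p.toReal))
    (hB : p ≠ ∞ → Summable (fun n => sv B n ^ p.toReal)) :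
    p ≠ ∞ → Summable (fun n => sv (A - B) n ^ p.toReal) := by
  intro hptop
  set t : ℝ := p.toReal with htdef
  have ht0 : 0 ≤ t := ENNReal.toReal_nonneg
  have hmaj : ∀ m, sv (A - B) m ^ t
      ≤ 2 ^ t * (sv A (m/2) ^ t + sv B (m/2) ^ t) := by
    intro m
    have h1 : sv (A - B) m ≤ sv A (m/2) + sv B (m/2) := by
      have h2 : sv (A - B) m ≤ sv (A - B) (m/2 + m/2) := sv_antitone _ (by omega)
      have h3 : A - B = A + -B := by abel
      refine h2.trans ?_
      rw [h3]
      refine (sv_add_le A (-B) (m/2) (m/2)).trans ?_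
      rw [sv_neg]
    calc sv (A - B) m ^ t ≤ (sv A (m/2) + sv B (m/2)) ^ t :=
          Real.rpow_le_rpow (sv_nonneg _ _) h1 ht0
      _ ≤ 2 ^ t * (sv A (m/2) ^ t + sv B (m/2) ^ t) :=
          rpow_add_le' (sv_nonneg _ _) (sv_nonneg _ _) ht0
  have hsumh : Summable (fun k => sv A k ^ t + sv B k ^ t) := (hA hptop).add (hB hptop)
  have hh0 : ∀ k, 0 ≤ sv A k ^ t + sv B k ^ t := fun k =>
    add_nonneg (Real.rpow_nonneg (sv_nonneg _ _) t) (Real.rpow_nonneg (sv_nonneg _ _) t)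
  have hdiv := summable_div_two hh0 hsumh
  exact Summable.of_nonneg_of_le (fun m => Real.rpow_nonneg (sv_nonneg _ _) t)
    hmaj (hdiv.mul_left _)

lemma isTraceOf_neg {M : X →L[ℂ] X} {z : ℂ} (hz : IsTraceOf M z) : IsTraceOf (-M) (-z) := by
  intro ι b
  have := (hz ι b).neg
  simpa [ContinuousLinearMap.neg_apply, inner_neg_right] using this

lemma comp_adjoint_eq (A B U : X →L[ℂ] X) :
    A.comp ((ContinuousLinearMap.adjoint U).comp (B.comp U)) = A * (star U * (B * U)) := by
  rw [← ContinuousLinearMap.star_eq_adjoint]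
  rfl

end Helpers
/-- Hausdorff-metric continuity of the `C`-numerical range: if `C_n → C` in the Schatten-`p`
norm and `T_n → T` in the Schatten-`q` norm, then `closure W_{C_n}(T_n) → closure W_C(T)`
in the Hausdorff metric. -/
theorem stmt12 {X : Type u}
    [NormedAddCommGroup X] [InnerProductSpace ℂ X] [CompleteSpace X]
    (hX : ¬ FiniteDimensional ℂ X)
    (p q : ℝ≥0∞) (hp : 1 ≤ p) (hq : 1 ≤ q) (hpq : 1 / p + 1 / q = 1)
    (C T : X →L[ℂ] X) (Cs Ts : ℕ → X →L[ℂ] X)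
    (hC : MemSchatten p C) (hT : MemSchatten q T)
    (hCs : ∀ n, MemSchatten p (Cs n)) (hTs : ∀ n, MemSchatten q (Ts n))
    (hCconv : Filter.Tendsto (fun n => schattenNorm p (C - Cs n)) Filter.atTop (nhds 0))
    (hTconv : Filter.Tendsto (fun n => schattenNorm q (T - Ts n)) Filter.atTop (nhds 0)) :
    Filter.Tendsto (fun n => Metric.hausdorffDist
        (closure {z : ℂ | ∃ U ∈ unitary (X →L[ℂ] X),
            IsTraceOf ((Cs n).comp ((ContinuousLinearMap.adjoint U).comp ((Ts n).comp U))) z})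
        (closure {z : ℂ | ∃ U ∈ unitary (X →L[ℂ] X),
            IsTraceOf (C.comp ((ContinuousLinearMap.adjoint U).comp (T.comp U))) z}))
      Filter.atTop (nhds 0) := by
  simp only [comp_adjoint_eq]
  set KT : ℝ := schattenNorm q T with hKT
  set KC : ℝ := schattenNorm p C with hKC
  set εf : ℕ → ℝ := fun n => 60 * (schattenNorm p (C - Cs n) * KT)
      + 60 * (KC * schattenNorm q (T - Ts n))
      + 60 * (schattenNorm p (C - Cs n) * schattenNorm q (T - Ts n)) with hεf
  have main : ∀ n, ∀ U ∈ unitary (X →L[ℂ] X), ∃ w w' : ℂ,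
      IsTraceOf (C * (star U * (T * U))) w ∧
      IsTraceOf (Cs n * (star U * (Ts n * U))) w' ∧ ‖w' - w‖ ≤ εf n := by
    intro n U hU
    have hD : p ≠ ∞ → Summable (fun m => sv (C - Cs n) m ^ p.toReal) :=
      svmem_sub hp C (Cs n) hC.2 (hCs n).2
    have hE : q ≠ ∞ → Summable (fun m => sv (T - Ts n) m ^ q.toReal) :=
      svmem_sub hq T (Ts n) hT.2 (hTs n).2
    obtain ⟨w, hw, -⟩ := key_trace p q hp hq hpq C T hC.2 hT.2 hU
    obtain ⟨z1, hz1, hz1b⟩ := key_trace p q hp hq hpq (C - Cs n) T hD hT.2 hU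
    obtain ⟨z2, hz2, hz2b⟩ := key_trace p q hp hq hpq C (T - Ts n) hC.2 hE hU
    obtain ⟨z3, hz3, hz3b⟩ := key_trace p q hp hq hpq (C - Cs n) (T - Ts n) hD hE hU
    have hdec : Cs n * (star U * (Ts n * U))
        = C * (star U * (T * U)) + -((C - Cs n) * (star U * (T * U)))
          + -(C * (star U * ((T - Ts n) * U))) + (C - Cs n) * (star U * ((T - Ts n) * U)) := by
      noncomm_ring
    have hw' : IsTraceOf (Cs n * (star U * (Ts n * U))) (w + -z1 + -z2 + z3) := by
      rw [hdec]
      exact isTraceOf_add (isTraceOf_add (isTraceOf_add hw (isTraceOf_neg hz1))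
        (isTraceOf_neg hz2)) hz3
    refine ⟨w, w + -z1 + -z2 + z3, hw, hw', ?_⟩
    have hsub : w + -z1 + -z2 + z3 - w = z3 - z1 - z2 := by ring
    rw [hsub]
    calc ‖z3 - z1 - z2‖ ≤ ‖z3 - z1‖ + ‖z2‖ := norm_sub_le _ _
      _ ≤ ‖z3‖ + ‖z1‖ + ‖z2‖ := by
          have := norm_sub_le z3 z1
          linarith
      _ ≤ εf n := by
          rw [hεf]
          dsimp only
          linarith
  have hεf0 : ∀ n, 0 ≤ εf n := by
    intro n
    have h1 := schattenNorm_nonneg (p := p) (C - Cs n)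
    have h2 := schattenNorm_nonneg (p := q) (T - Ts n)
    have h3 := schattenNorm_nonneg (p := q) T
    have h4 := schattenNorm_nonneg (p := p) C
    rw [← hKT] at h3
    rw [← hKC] at h4
    rw [hεf]
    dsimp only
    nlinarith
  have hbound : ∀ n, Metric.hausdorffDist
      (closure {z : ℂ | ∃ U ∈ unitary (X →L[ℂ] X),
          IsTraceOf (Cs n * (star U * (Ts n * U))) z})
      (closure {z : ℂ | ∃ U ∈ unitary (X →L[ℂ] X),
          IsTraceOf (C * (star U * (T * U))) z}) ≤ εf n := by
    intro n
    rw [Metric.hausdorffDist_closure]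
    refine Metric.hausdorffDist_le_of_mem_dist (hεf0 n) ?_ ?_
    · rintro x ⟨U, hU, htr⟩
      obtain ⟨w, w', hw, hw', hdist⟩ := main n U hU
      refine ⟨w, ⟨U, hU, hw⟩, ?_⟩
      have hx : x = w' := isTraceOf_unique htr hw'
      rw [hx, dist_eq_norm]
      exact hdist
    · rintro y ⟨U, hU, htr⟩
      obtain ⟨w, w', hw, hw', hdist⟩ := main n U hU
      refine ⟨w', ⟨U, hU, hw'⟩, ?_⟩
      have hy : y = w := isTraceOf_unique htr hw
      rw [hy, dist_eq_norm, norm_sub_rev]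
      exact hdist
  have htend : Tendsto εf atTop (nhds 0) := by
    have t1 : Tendsto (fun n => 60 * (schattenNorm p (C - Cs n) * KT)) atTop
        (nhds (60 * (0 * KT))) := (hCconv.mul_const KT).const_mul 60
    have t2 : Tendsto (fun n => 60 * (KC * schattenNorm q (T - Ts n))) atTop
        (nhds (60 * (KC * 0))) := (hTconv.const_mul KC).const_mul 60
    have t3 : Tendsto (fun n => 60 * (schattenNorm p (C - Cs n) * schattenNorm q (T - Ts n)))
        atTop (nhds (60 * (0 * 0))) := (hCconv.mul hTconv).const_mul 60
    have := (t1.add t2).add t3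
    simpa using this
  exact squeeze_zero (fun n => Metric.hausdorffDist_nonneg) hbound htend

end
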